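/- For every integer n ≥ 0, every integer k, and every real a > 0, the Hurwitz type poly-Bernoulli numbers satisfy B_{n,a}^{(k)} = ∑_{m=0}^{n} (−1)^{n+m} · m! · S(n,m)/(m+a)^k = (−1)^n ∑_{m=0}^{n} (−1)^m m! S(n,m)/(m+a)^k, where S(n,m) denotes the Stirling number of the second kind. -/

import Mathlib

open Nat Finset

/-- The Hurwitz–Lerch zeta function `Φ(z,k,a) = ∑_{m≥0} z^m/(m+a)^k`. -/
noncomputable def hlZeta (z : ℝ) (k : ℤ) (a : ℝ) : ℝ :=
  ∑' m : ℕ, z ^ m / ((m : ℝ) + a) ^ k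

/-- Stirling numbers of the second kind. -/
def stirling2 : ℕ → ℕ → ℕ
  | 0, 0 => 1
  | 0, _ + 1 => 0
  | _ + 1, 0 => 0
  | n + 1, k + 1 => (k + 1) * stirling2 n (k + 1) + stirling2 n k

lemma stirling2_eq_zero : ∀ n m : ℕ, n < m → stirling2 n m = 0
  | 0, m + 1, _ => rfl
  | n + 1, m + 1, h => by
    have h1 : n < m + 1 := by omega
    have h2 : n < m := by omega
    simp [stirling2, stirling2_eq_zero n (m+1) h1, stirling2_eq_zero n m h2]
noncomputable def stT (n m : ℕ) : ℝ :=
  ∑ j ∈ range (m + 1), (-1 : ℝ) ^ (j + m) * (m.choose j : ℝ) * (j : ℝ) ^ n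

lemma stT_step1 (n m : ℕ) :
    stT (n + 1) (m + 1)
      = (m + 1 : ℝ) * ∑ i ∈ range (m + 1),
          (-1 : ℝ) ^ (i + m) * (m.choose i : ℝ) * ((i : ℝ) + 1) ^ n := by
  rw [stT, Finset.sum_range_succ']
  have h0 : (-1 : ℝ) ^ (0 + (m+1)) * ((m+1).choose 0 : ℝ) * ((0:ℕ) : ℝ) ^ (n+1) = 0 := by
    simp
  rw [h0, add_zero, Finset.mul_sum]
  refine Finset.sum_congr rfl fun i _ => ?_
  have hch : ((m+1).choose (i+1) : ℝ) * ((i : ℝ) + 1) = ((m:ℝ) + 1) * (m.choose i : ℝ) := by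
    have := Nat.add_one_mul_choose_eq m i
    have : ((m+1) * m.choose i : ℕ) = ((m+1).choose (i+1) * (i+1) : ℕ) := this
    have h := congrArg (fun x : ℕ => (x : ℝ)) this
    push_cast at h ⊢
    linarith
  have hsign : (-1 : ℝ) ^ (i + 1 + (m + 1)) = (-1 : ℝ) ^ (i + m) := by
    have : i + 1 + (m + 1) = (i + m) + 2 := by omega
    rw [this, pow_add]; norm_num
  push_cast
  rw [hsign, pow_succ]
  linear_combination ((-1:ℝ)^(i+m) * ((i:ℝ)+1)^n) * hch

lemma stT_step2 (n m : ℕ) :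
    stT n (m + 1)
      = (∑ i ∈ range (m + 1), (-1 : ℝ) ^ (i + m) * (m.choose i : ℝ) * ((i : ℝ) + 1) ^ n)
        - stT n m := by
  have hU : stT n (m+1)
      = (∑ i ∈ range (m + 1),
          (-1 : ℝ) ^ (i + m) * ((m.choose i : ℝ) + (m.choose (i+1) : ℝ)) * ((i : ℝ) + 1) ^ n)
        + (-1 : ℝ) ^ (m+1) * ((0:ℕ) : ℝ) ^ n := by
    rw [stT, Finset.sum_range_succ']
    congr 1
    · refine Finset.sum_congr rfl fun i _ => ?_
      have hsign : (-1 : ℝ) ^ (i + 1 + (m + 1)) = (-1 : ℝ) ^ (i + m) := by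
        have : i + 1 + (m + 1) = (i + m) + 2 := by omega
        rw [this, pow_add]; norm_num
      have hch : ((m+1).choose (i+1) : ℝ) = (m.choose i : ℝ) + (m.choose (i+1) : ℝ) := by
        rw [Nat.choose_succ_succ]; push_cast; ring
      rw [hsign, hch]; push_cast; ring
    · simp
  have hT : stT n m
      = - (∑ i ∈ range m, (-1 : ℝ) ^ (i + m) * (m.choose (i+1) : ℝ) * ((i : ℝ) + 1) ^ n)
        + (-1 : ℝ) ^ m * ((0:ℕ) : ℝ) ^ n := by
    rw [stT, Finset.sum_range_succ', ← Finset.sum_neg_distrib]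
    congr 1
    · refine Finset.sum_congr rfl fun i _ => ?_
      have hsign : (-1 : ℝ) ^ (i + 1 + m) = -(-1 : ℝ) ^ (i + m) := by
        rw [show i + 1 + m = (i + m) + 1 by omega, pow_succ]; ring
      rw [hsign]; push_cast; ring
    · simp
  have hV : ∑ i ∈ range (m + 1), (-1 : ℝ) ^ (i + m) * (m.choose (i+1) : ℝ) * ((i : ℝ) + 1) ^ n
      = ∑ i ∈ range m, (-1 : ℝ) ^ (i + m) * (m.choose (i+1) : ℝ) * ((i : ℝ) + 1) ^ n := by
    rw [Finset.sum_range_succ, Nat.choose_succ_self]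
    simp
  have hsplit : ∀ i ∈ range (m+1),
      (-1 : ℝ) ^ (i + m) * ((m.choose i : ℝ) + (m.choose (i+1) : ℝ)) * ((i : ℝ) + 1) ^ n
      = (-1 : ℝ) ^ (i + m) * (m.choose i : ℝ) * ((i : ℝ) + 1) ^ n
        + (-1 : ℝ) ^ (i + m) * (m.choose (i+1) : ℝ) * ((i : ℝ) + 1) ^ n :=
    fun i _ => by ring
  rw [hU, Finset.sum_congr rfl hsplit, Finset.sum_add_distrib, hV, hT]
  have : (-1:ℝ)^(m+1) = -(-1:ℝ)^m := by rw [pow_succ]; ring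
  rw [this]; ring

lemma key (n m : ℕ) : ((m ! : ℝ)) * (stirling2 n m : ℝ) = stT n m := by
  induction n generalizing m with
  | zero =>
    have h : stT 0 m = ((1:ℝ) - 1) ^ m := by
      rw [sub_pow, stT]
      exact Finset.sum_congr rfl fun j _ => by rw [pow_zero]; ring
    rw [h]
    cases m with
    | zero => simp [stirling2]
    | succ m => simp [stirling2, stirling2_eq_zero 0 (m+1) (Nat.succ_pos m)]
  | succ n ih =>
    cases m with
    | zero =>
      rw [stT]
      simp [stirling2]
    | succ m =>
      have hL : (((m+1)! : ℕ) : ℝ) * (stirling2 (n+1) (m+1) : ℝ)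
          = ((m:ℝ)+1) * (stT n (m+1) + stT n m) := by
        rw [show stirling2 (n+1) (m+1) = (m+1) * stirling2 n (m+1) + stirling2 n m from rfl,
          ← ih (m+1), ← ih m]
        push_cast [Nat.factorial_succ]
        ring
      rw [hL, stT_step2, stT_step1]
      ring

lemma egf (m : ℕ) (t : ℝ) :
    HasSum (fun n : ℕ => ((m ! : ℝ) * (stirling2 n m : ℝ)) * t ^ n / n !)
      ((Real.exp t - 1) ^ m) := by
  have h1 : ∀ j : ℕ, HasSum
      (fun n : ℕ => ((-1:ℝ)^(j+m) * (m.choose j : ℝ)) * ((j:ℝ)^n * t^n / n !))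
      (((-1:ℝ)^(j+m) * (m.choose j : ℝ)) * Real.exp ((j:ℝ) * t)) := by
    intro j
    have he := NormedSpace.expSeries_div_hasSum_exp ((j:ℝ) * t)
    rw [← Real.exp_eq_exp_ℝ] at he
    have he' : HasSum (fun n : ℕ => (j:ℝ)^n * t^n / n !) (Real.exp ((j:ℝ)*t)) := by
      refine he.congr_fun fun n => ?_
      rw [mul_pow]
    exact he'.mul_left _
  have h2 := hasSum_sum (s := range (m+1))
    (f := fun j n => ((-1:ℝ)^(j+m) * (m.choose j : ℝ)) * ((j:ℝ)^n * t^n / n !))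
    (a := fun j => ((-1:ℝ)^(j+m) * (m.choose j : ℝ)) * Real.exp ((j:ℝ) * t))
    (fun j _ => h1 j)
  have hval : ∑ j ∈ range (m+1), ((-1:ℝ)^(j+m) * (m.choose j : ℝ)) * Real.exp ((j:ℝ) * t)
      = (Real.exp t - 1) ^ m := by
    rw [sub_pow]
    refine Finset.sum_congr rfl fun j _ => ?_
    rw [Real.exp_nat_mul]
    ring
  have hfun : ∀ n : ℕ,
      (∑ j ∈ range (m+1), ((-1:ℝ)^(j+m) * (m.choose j : ℝ)) * ((j:ℝ)^n * t^n / n !))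
      = ((m ! : ℝ) * (stirling2 n m : ℝ)) * t ^ n / n ! := by
    intro n
    rw [key n m, stT]
    rw [Finset.sum_mul, Finset.sum_div]
    exact Finset.sum_congr rfl fun j _ => by ring
  rw [hval] at h2
  exact h2.congr_fun fun n => (hfun n).symm

lemma aux_summable (k : ℤ) {a r : ℝ} (ha : 0 < a) (hr0 : 0 < r) (hr1 : r < 1) :
    Summable (fun m : ℕ => r ^ m / ((m : ℝ) + a) ^ k) := by
  have hbase : ∀ m : ℕ, (0:ℝ) < (m : ℝ) + a := fun m => by positivity
  have hpos : ∀ m : ℕ, 0 < r ^ m / ((m : ℝ) + a) ^ k := fun m =>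
    div_pos (pow_pos hr0 m) (zpow_pos (hbase m) k)
  refine summable_of_ratio_test_tendsto_lt_one hr1
    (Filter.Eventually.of_forall fun m => (hpos m).ne') ?_
  have hq : Filter.Tendsto (fun m : ℕ => ((m:ℝ) + a) / ((m:ℝ) + 1 + a))
      Filter.atTop (nhds 1) := by
    have h1 : Filter.Tendsto (fun m : ℕ => ((m:ℝ) + 1 + a)) Filter.atTop Filter.atTop := by
      have := tendsto_natCast_atTop_atTop (R := ℝ)
      exact Filter.tendsto_atTop_add_const_right _ (1 + a)
        (by simpa using this) |>.congr (fun m => by ring)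
    have h2 : Filter.Tendsto (fun m : ℕ => ((m:ℝ) + 1 + a)⁻¹) Filter.atTop (nhds 0) :=
      h1.inv_tendsto_atTop
    have h3 := h2.const_sub 1
    rw [sub_zero] at h3
    refine h3.congr fun m => ?_
    have hm1 : ((m:ℝ) + 1 + a) ≠ 0 := by positivity
    field_simp
    ring
  have hqk : Filter.Tendsto (fun m : ℕ => (((m:ℝ) + a) / ((m:ℝ) + 1 + a)) ^ k)
      Filter.atTop (nhds 1) := by
    have hc : ContinuousAt (fun x : ℝ => x ^ k) 1 :=
      continuousAt_zpow₀ 1 k (Or.inl one_ne_zero)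
    have := hc.tendsto.comp hq
    rwa [one_zpow] at this
  have hfin := hqk.const_mul r
  rw [mul_one] at hfin
  refine hfin.congr fun m => ?_
  have hm : (0:ℝ) < (m : ℝ) + a := hbase m
  have hm1 : (0:ℝ) < (m : ℝ) + 1 + a := by positivity
  rw [Real.norm_eq_abs, Real.norm_eq_abs, abs_of_pos (hpos (m+1)), abs_of_pos (hpos m)]
  push_cast
  rw [div_zpow, div_div_div_comm, pow_succ,
    mul_div_cancel_left₀ _ (pow_ne_zero m hr0.ne'), div_div_eq_mul_div, mul_div_assoc]


lemma hasSum_C (k : ℤ) {a : ℝ} (ha : 0 < a) {t : ℝ} (ht0 : t ≠ 0) (ht : |t| < Real.log 2) :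
    HasSum (fun n : ℕ =>
      (∑ m ∈ Finset.range (n + 1),
        (-1 : ℝ) ^ (n + m) * (m ! : ℝ) * (stirling2 n m : ℝ) / ((m : ℝ) + a) ^ k)
        * t ^ n / n !)
      (hlZeta (1 - Real.exp (-t)) k a) := by
  set r : ℝ := Real.exp |t| - 1 with hr
  have hr0 : 0 < r := by
    have : (1:ℝ) < Real.exp |t| := by
      rw [← Real.exp_zero]
      exact Real.exp_lt_exp.mpr (abs_pos.mpr ht0)
    linarith
  have hr1 : r < 1 := by
    have : Real.exp |t| < 2 := by
      calc Real.exp |t| < Real.exp (Real.log 2) := Real.exp_lt_exp.mpr ht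
        _ = 2 := Real.exp_log two_pos
    simp [hr]; linarith
  set F : ℕ × ℕ → ℝ := fun p =>
    (-1:ℝ) ^ (p.2 + p.1) *
      (((p.1)! : ℝ) * (stirling2 p.2 p.1 : ℝ) * t ^ p.2 / ((p.2)! : ℝ) / ((p.1:ℝ) + a) ^ k)
    with hF
  set G : ℕ × ℕ → ℝ := fun p =>
    ((p.1)! : ℝ) * (stirling2 p.2 p.1 : ℝ) * |t| ^ p.2 / ((p.2)! : ℝ) / ((p.1:ℝ) + a) ^ k
    with hGdef
  have hbase : ∀ m : ℕ, (0:ℝ) < (m:ℝ) + a := fun m => by positivity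
  have hrowG : ∀ m : ℕ, HasSum (fun n => G (m, n)) (r ^ m / ((m:ℝ) + a) ^ k) := by
    intro m
    have h := (egf m |t|).div_const (((m:ℝ) + a) ^ k)
    refine h.congr_fun fun n => ?_
    simp only [hGdef]
  have hGnonneg : ∀ p : ℕ × ℕ, 0 ≤ G p := by
    intro p
    have := hbase p.1
    simp only [hGdef]
    positivity
  have hGsummable : Summable G := by
    refine (summable_prod_of_nonneg hGnonneg).2 ⟨fun m => (hrowG m).summable, ?_⟩
    refine ((aux_summable k ha hr0 hr1).congr fun m => ?_)
    exact ((hrowG m).tsum_eq).symm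
  have hFabs : ∀ p : ℕ × ℕ, |F p| = G p := by
    intro p
    have h1 : (0:ℝ) < ((p.1:ℝ) + a) ^ k := zpow_pos (hbase p.1) k
    simp only [hF, hGdef, abs_mul, abs_div, abs_pow, abs_neg, abs_one, one_pow, one_mul,
      Nat.abs_cast, abs_of_pos h1]
  have hFsummable : Summable F := by
    rw [← summable_abs_iff]
    exact hGsummable.congr fun p => (hFabs p).symm
  have hHasF : HasSum F (∑' p, F p) := hFsummable.hasSum
  have hrowF : ∀ m : ℕ, HasSum (fun n => F (m, n))
      ((1 - Real.exp (-t)) ^ m / ((m:ℝ) + a) ^ k) := by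
    intro m
    have h := (egf m (-t)).mul_left ((-1:ℝ) ^ m / ((m:ℝ) + a) ^ k)
    have hpowv : (-1:ℝ) ^ m * (Real.exp (-t) - 1) ^ m = (1 - Real.exp (-t)) ^ m := by
      rw [← mul_pow]
      congr 1
      ring
    have hv : (-1:ℝ) ^ m / ((m:ℝ) + a) ^ k * (Real.exp (-t) - 1) ^ m
        = (1 - Real.exp (-t)) ^ m / ((m:ℝ) + a) ^ k := by
      rw [div_mul_eq_mul_div, hpowv]
    rw [hv] at h
    refine h.congr_fun fun n => ?_
    simp only [hF]
    rw [neg_pow t n, pow_add]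
    ring
  have hfib1 : HasSum (fun m : ℕ => (1 - Real.exp (-t)) ^ m / ((m:ℝ) + a) ^ k) (∑' p, F p) :=
    hHasF.prod_fiberwise hrowF
  have hz : hlZeta (1 - Real.exp (-t)) k a = ∑' p, F p := by
    rw [hlZeta]
    exact hfib1.tsum_eq
  have hswap : HasSum (fun p : ℕ × ℕ => F (p.2, p.1)) (∑' p, F p) :=
    ((Equiv.prodComm ℕ ℕ).hasSum_iff).mpr hHasF
  have hcol : ∀ n : ℕ, HasSum (fun m => F (m, n))
      ((∑ m ∈ Finset.range (n + 1),
        (-1 : ℝ) ^ (n + m) * (m ! : ℝ) * (stirling2 n m : ℝ) / ((m : ℝ) + a) ^ k)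
        * t ^ n / n !) := by
    intro n
    have h0 : ∀ m ∉ Finset.range (n+1), F (m, n) = 0 := by
      intro m hm
      have hz : stirling2 n m = 0 := stirling2_eq_zero n m (by simpa using hm)
      simp [hF, hz]
    have h : HasSum (fun m => F (m, n)) _ := hasSum_sum_of_ne_finset_zero h0
    have heq : ∑ m ∈ Finset.range (n+1), F (m, n)
        = (∑ m ∈ Finset.range (n + 1),
          (-1 : ℝ) ^ (n + m) * (m ! : ℝ) * (stirling2 n m : ℝ) / ((m : ℝ) + a) ^ k)
          * t ^ n / n ! := by
      rw [Finset.sum_mul, Finset.sum_div]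
      refine Finset.sum_congr rfl fun m _ => ?_
      simp only [hF]
      ring
    rw [heq] at h
    exact h
  have hfinal : HasSum (fun n : ℕ =>
      (∑ m ∈ Finset.range (n + 1),
        (-1 : ℝ) ^ (n + m) * (m ! : ℝ) * (stirling2 n m : ℝ) / ((m : ℝ) + a) ^ k)
        * t ^ n / n !) (∑' p, F p) :=
    hswap.prod_fiberwise hcol
  rw [hz]
  exact hfinal

lemma coeff_zero {D : ℕ → ℝ} {ε : ℝ} (hε : 0 < ε)
    (h : ∀ t : ℝ, t ≠ 0 → |t| < ε → HasSum (fun n : ℕ => D n * t ^ n / n !) 0) :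
    ∀ n, D n = 0 := by
  set c : ℕ → ℝ := fun n => D n / n ! with hc
  set p : FormalMultilinearSeries ℝ ℝ ℝ := FormalMultilinearSeries.ofScalars ℝ c with hp
  have happ : ∀ (n : ℕ) (t : ℝ), (p n fun _ => t) = D n * t ^ n / n ! := by
    intro n t
    rw [hp, FormalMultilinearSeries.ofScalars_apply_eq]
    simp only [hc, smul_eq_mul]
    ring
  -- radius bound
  set t0 : ℝ := ε / 2 with ht0
  have ht0pos : 0 < t0 := by positivity
  have hsum0 : HasSum (fun n : ℕ => D n * t0 ^ n / n !) 0 :=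
    h t0 ht0pos.ne' (by rw [abs_of_pos ht0pos]; linarith)
  set t0n : NNReal := ⟨t0, ht0pos.le⟩ with ht0n
  have ht0ncoe : (t0n : ℝ) = t0 := rfl
  have ht0npos : 0 < t0n := by rw [← NNReal.coe_lt_coe, ht0ncoe]; exact ht0pos
  have hrad : (t0n : ENNReal) ≤ p.radius := by
    apply p.le_radius_of_tendsto (l := 0)
    have h1 : Filter.Tendsto (fun n : ℕ => D n * t0 ^ n / n !) Filter.atTop (nhds 0) :=
      hsum0.summable.tendsto_atTop_zero
    have h2 := h1.abs
    rw [abs_zero] at h2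
    refine h2.congr fun n => ?_
    rw [FormalMultilinearSeries.ofScalars_norm, ht0ncoe]
    simp only [hc, Real.norm_eq_abs, abs_div, abs_mul, abs_pow, abs_inv, Nat.abs_cast,
      abs_of_pos ht0pos]
    ring
  have hradpos : 0 < p.radius :=
    lt_of_lt_of_le (ENNReal.coe_pos.mpr ht0npos) hrad
  have hball : HasFPowerSeriesOnBall p.sum p 0 p.radius :=
    p.hasFPowerSeriesOnBall hradpos
  -- p.sum vanishes on the punctured ball of radius t0
  have hsumzero : ∀ t : ℝ, t ≠ 0 → |t| < t0 → p.sum t = 0 := by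
    intro t htne habs
    have hnn : ‖t‖₊ < t0n := by
      rw [← NNReal.coe_lt_coe, ht0ncoe]
      simpa [Real.norm_eq_abs] using habs
    have hmem : t ∈ Metric.eball (0 : ℝ) p.radius := by
      rw [Metric.mem_eball, edist_zero_right]
      exact lt_of_lt_of_le (ENNReal.coe_lt_coe.mpr hnn) hrad
    have h1 : HasSum (fun n : ℕ => p n fun _ => t) (p.sum t) := p.hasSum hmem
    have h2 : HasSum (fun n : ℕ => p n fun _ => t) 0 := by
      refine (h t htne (lt_trans habs (by rw [ht0]; linarith))).congr_fun fun n => ?_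
      exact happ n t
    exact h1.unique h2
  have hcont : ContinuousAt p.sum 0 :=
    (hball.continuousOn).continuousAt
      (Metric.isOpen_eball.mem_nhds (Metric.mem_eball_self hradpos))
  have hb : ∀ᶠ t in nhds (0:ℝ), |t| < t0 := by
    have := eventually_abs_sub_lt (0:ℝ) ht0pos
    simpa using this
  have hevp : ∀ᶠ t in nhdsWithin (0:ℝ) {(0:ℝ)}ᶜ, p.sum t = 0 := by
    filter_upwards [hb.filter_mono nhdsWithin_le_nhds, eventually_mem_nhdsWithin] with t h1 h2
    exact hsumzero t h2 h1
  have h0 : p.sum 0 = 0 := by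
    have hpt : Filter.Tendsto p.sum (nhdsWithin 0 {(0:ℝ)}ᶜ) (nhds (p.sum 0)) :=
      hcont.tendsto.mono_left nhdsWithin_le_nhds
    have hzero : Filter.Tendsto p.sum (nhdsWithin 0 {(0:ℝ)}ᶜ) (nhds 0) :=
      Filter.Tendsto.congr' (hevp.mono fun t ht => ht.symm) tendsto_const_nhds
    exact tendsto_nhds_unique hpt hzero
  have hev0 : p.sum =ᶠ[nhds (0:ℝ)] 0 := by
    filter_upwards [hb] with t hbt
    by_cases htz : t = 0
    · rw [htz, h0]; rfl
    · exact hsumzero t htz hbt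
  have hp0 : p = 0 := (hball.hasFPowerSeriesAt).eq_zero_of_eventually hev0
  intro n
  have hpn : FormalMultilinearSeries.ofScalars ℝ c n = 0 := by
    rw [← hp, hp0]; rfl
  have hcn : c n = 0 := (FormalMultilinearSeries.ofScalars_eq_zero ℝ n).mp hpn
  have hfac : ((n ! : ℝ)) ≠ 0 := Nat.cast_ne_zero.mpr (Nat.factorial_ne_zero n)
  have : D n / (n ! : ℝ) = 0 := hcn
  field_simp at this
  simpa using this

/-- the Hurwitz type poly-Bernoulli numbers (with e.g.f. `Φ(1−e^{−t},k,a)`) satisfy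
`B_{n,a}^{(k)} = ∑_{m=0}^{n} (−1)^{n+m} m! S(n,m)/(m+a)^k
             = (−1)^n ∑_{m=0}^{n} (−1)^m m! S(n,m)/(m+a)^k`. -/
theorem statement16
    (k : ℤ) (a : ℝ) (ha : 0 < a)
    (B : ℕ → ℝ)
    (hB : ∃ ε > 0, ∀ t : ℝ, t ≠ 0 → |t| < ε →
      HasSum (fun n : ℕ => B n * t ^ n / (n ! : ℝ))
        (hlZeta (1 - Real.exp (-t)) k a))
    (n : ℕ) :
    B n = ∑ m ∈ Finset.range (n + 1),
        (-1 : ℝ) ^ (n + m) * (m ! : ℝ) * (stirling2 n m : ℝ) / ((m : ℝ) + a) ^ k ∧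
    B n = (-1 : ℝ) ^ n * ∑ m ∈ Finset.range (n + 1),
        (-1 : ℝ) ^ m * (m ! : ℝ) * (stirling2 n m : ℝ) / ((m : ℝ) + a) ^ k := by

  obtain ⟨ε, hε, hB⟩ := hB
  set Cc : ℕ → ℝ := fun n => ∑ m ∈ Finset.range (n + 1),
      (-1 : ℝ) ^ (n + m) * (m ! : ℝ) * (stirling2 n m : ℝ) / ((m : ℝ) + a) ^ k with hCc
  have hδ : 0 < min ε (Real.log 2) := lt_min hε (Real.log_pos one_lt_two)
  have hsub : ∀ t : ℝ, t ≠ 0 → |t| < min ε (Real.log 2) →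
      HasSum (fun n : ℕ => (B n - Cc n) * t ^ n / (n ! : ℝ)) 0 := by
    intro t ht0 ht
    have h1 := hB t ht0 (lt_of_lt_of_le ht (min_le_left _ _))
    have h2 := hasSum_C k ha ht0 (lt_of_lt_of_le ht (min_le_right _ _))
    have h3 := h1.sub h2
    rw [sub_self] at h3
    refine h3.congr_fun fun n => ?_
    rw [hCc]
    ring
  have hzero := coeff_zero hδ hsub n
  have h1 : B n = Cc n := by linarith [hzero]
  constructor
  · exact h1
  · rw [h1, hCc, Finset.mul_sum]
    refine Finset.sum_congr rfl fun m _ => ?_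
    rw [pow_add]
    ring
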